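/- Fix an integer N > 1. Let S be a KdV subset with leading term A = {a₁ < … < a_N}, and let σ be a permutation of {1,…,N}. For i = 1,…,N define S_i = {a_{σ(1)}+i−N, a_{σ(2)}+i−N, …, a_{σ(i)}+i−N} ∪ (S+i). Then (S₁,…,S_N) is an mKdV tuple of subsets, and S_N = S. -/

import Mathlib

/-- A subset `S ⊆ ℤ` is of virtual cardinal zero if both `S \ ℤ≥0` and `ℤ≥0 \ S`
are finite and have the same cardinality. -/
def VirtualCardZero (S : Set ℤ) : Prop :=
  (S \ {n : ℤ | 0 ≤ n}).Finite ∧ ({n : ℤ | 0 ≤ n} \ S).Finite ∧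
    (S \ {n : ℤ | 0 ≤ n}).ncard = ({n : ℤ | 0 ≤ n} \ S).ncard

/-- The shift `S + k = {s + k : s ∈ S}` of a set of integers. -/
def shiftSet (S : Set ℤ) (k : ℤ) : Set ℤ := (fun s => s + k) '' S

/-- A KdV subset (for a fixed `N`): a subset `S ⊆ ℤ` of virtual cardinal zero
such that `S + N ⊆ S`. -/
def IsKdV (N : ℕ) (S : Set ℤ) : Prop :=
  VirtualCardZero S ∧ shiftSet S N ⊆ S

/-- `A` is the leading term of the KdV subset `S`: `A` is an `N`-element set with
`S = A ∪ (S+N)` and `A ∩ (S+N) = ∅`. -/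
def IsLeadingTerm (N : ℕ) (S : Set ℤ) (A : Finset ℤ) : Prop :=
  A.card = N ∧ (↑A : Set ℤ) ∪ shiftSet S N = S ∧ (↑A : Set ℤ) ∩ shiftSet S N = ∅

/-- The mutation `S[a] = {a+1−N} ∪ (S+1)` of a KdV subset `S` at an element `a`
of its leading term. -/
def mutate (N : ℕ) (S : Set ℤ) (a : ℤ) : Set ℤ :=
  {a + 1 - (N : ℤ)} ∪ shiftSet S 1

/-- An mKdV tuple of subsets: an `N`-tuple `(S₁,…,S_N)` of KdV subsets with
`S_i + 1 ⊆ S_{i+1}` for `i = 1,…,N−1` and `S_N + 1 ⊆ S₁` (i.e. cyclically). -/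
def IsMKdVTuple (N : ℕ) [NeZero N] (T : Fin N → Set ℤ) : Prop :=
  (∀ i, IsKdV N (T i)) ∧ ∀ i : Fin N, shiftSet (T i) 1 ⊆ T (i + 1)

/-- The tuple `S_{S,σ}`: given a KdV subset `S` whose leading term is enumerated
increasingly by `a : Fin N → ℤ` and a permutation `σ`, its `i`-th entry (`i` being
0-based, corresponding to the 1-based index `i+1`) is
`S_{i+1} = {a_{σ(1)}+(i+1)−N, …, a_{σ(i+1)}+(i+1)−N} ∪ (S+(i+1))`. -/
def mkTuple (N : ℕ) (S : Set ℤ) (a : Fin N → ℤ) (σ : Equiv.Perm (Fin N))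
    (i : Fin N) : Set ℤ :=
  ((fun j : Fin N => a (σ j) + ((i : ℕ) : ℤ) + 1 - (N : ℤ)) ''
      {j : Fin N | (j : ℕ) ≤ (i : ℕ)}) ∪ shiftSet S (((i : ℕ) : ℤ) + 1)


lemma mem_shiftSet {S : Set ℤ} {k x : ℤ} : x ∈ shiftSet S k ↔ x - k ∈ S := by
  constructor
  · rintro ⟨s, hs, rfl⟩; simpa
  · intro h; exact ⟨x - k, h, by ring⟩

lemma vcz_step (S : Set ℤ) (h : VirtualCardZero S) (x : ℤ) (hx : x ∉ shiftSet S 1) :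
    VirtualCardZero ({x} ∪ shiftSet S 1) := by
  classical
  obtain ⟨hf1, hf2, hc⟩ := h
  set P : Set ℤ := {n : ℤ | 0 ≤ n} with hP
  have hinj : Function.Injective (fun z : ℤ => z + 1) := fun p q hpq => by simpa using hpq
  have hD1 : shiftSet S 1 \ P = (fun z => z + 1) '' ((S \ P) \ {-1}) := by
    ext y
    simp only [Set.mem_diff, mem_shiftSet, Set.mem_image, Set.mem_setOf_eq,
      Set.mem_singleton_iff, hP]
    constructor
    · rintro ⟨h1, h2⟩; exact ⟨y - 1, ⟨⟨h1, by omega⟩, by omega⟩, by ring⟩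
    · rintro ⟨z, ⟨⟨hz1, hz2⟩, hz3⟩, rfl⟩; exact ⟨by simpa using hz1, by omega⟩
  have hD2 : P \ shiftSet S 1 = (fun z => z + 1) '' ((P \ S) ∪ ({-1} \ S)) := by
    ext y
    simp only [Set.mem_diff, mem_shiftSet, Set.mem_image, Set.mem_setOf_eq,
      Set.mem_union, Set.mem_singleton_iff, hP]
    constructor
    · rintro ⟨h1, h2⟩
      refine ⟨y - 1, ?_, by ring⟩
      by_cases hy : 0 ≤ y - 1
      · exact Or.inl ⟨hy, h2⟩
      · exact Or.inr ⟨by omega, h2⟩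
    · rintro ⟨z, (⟨hz1, hz2⟩ | ⟨hz1, hz2⟩), rfl⟩
      · exact ⟨by omega, by simpa using hz2⟩
      · exact ⟨by omega, by simpa [hz1] using hz2⟩
  have hfin1 : ((S \ P) \ {-1}).Finite := hf1.diff
  have hfinD1 : (shiftSet S 1 \ P).Finite := hD1 ▸ hfin1.image _
  have hfin2 : ((P \ S) ∪ ({-1} \ S)).Finite := hf2.union ((Set.finite_singleton _).diff)
  have hfinD2 : (P \ shiftSet S 1).Finite := hD2 ▸ hfin2.image _
  have e1 : (shiftSet S 1 \ P).ncard = ((S \ P) \ {-1}).ncard := by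
    rw [hD1, Set.ncard_image_of_injective _ hinj]
  have e2 : (P \ shiftSet S 1).ncard = ((P \ S) ∪ ({-1} \ S)).ncard := by
    rw [hD2, Set.ncard_image_of_injective _ hinj]
  -- relate the pieces to the original cardinalities
  have hTd : ({x} ∪ shiftSet S 1) \ P = ({x} \ P) ∪ (shiftSet S 1 \ P) :=
    Set.union_diff_distrib
  have hPd : P \ ({x} ∪ shiftSet S 1) = (P \ shiftSet S 1) \ {x} := by
    ext y; simp [Set.mem_diff]; tauto
  have key1 : ((S \ P) \ {-1}).ncard + (if (-1 : ℤ) ∈ S then 1 else 0) = (S \ P).ncard := by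
    by_cases hm : (-1 : ℤ) ∈ S
    · simp only [hm, if_pos]
      exact Set.ncard_diff_singleton_add_one ⟨hm, by norm_num [hP]⟩ hf1
    · simp only [hm, if_neg, not_false_iff, add_zero]
      rw [Set.diff_singleton_eq_self (by simp [hm])]
  have key2 : ((P \ S) ∪ ({-1} \ S)).ncard = (P \ S).ncard + (if (-1 : ℤ) ∈ S then 0 else 1) := by
    by_cases hm : (-1 : ℤ) ∈ S
    · rw [if_pos hm, add_zero, Set.diff_eq_empty.mpr (Set.singleton_subset_iff.mpr hm),
        Set.union_empty]
    · have h5 : ({-1} : Set ℤ) \ S = {-1} := by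
        ext y
        simp only [Set.mem_diff, Set.mem_singleton_iff, and_iff_left_iff_imp]
        rintro rfl; exact hm
      rw [if_neg hm, h5, Set.ncard_union_eq (by simp [hP, Set.disjoint_left]; omega) hf2
        (Set.finite_singleton _), Set.ncard_singleton]
  by_cases hx0 : (0 : ℤ) ≤ x
  · have hxP : ({x} : Set ℤ) \ P = ∅ := by ext y; simp [hP]; omega
    have hxD2 : x ∈ P \ shiftSet S 1 := ⟨hx0, hx⟩
    have e3 : ((P \ shiftSet S 1) \ {x}).ncard + 1 = (P \ shiftSet S 1).ncard :=
      Set.ncard_diff_singleton_add_one hxD2 hfinD2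
    refine ⟨?_, ?_, ?_⟩
    · rw [hTd, hxP, Set.empty_union]; exact hfinD1
    · rw [hPd]; exact hfinD2.diff
    · rw [hTd, hxP, Set.empty_union, hPd, e1]
      by_cases hm : (-1 : ℤ) ∈ S
      · rw [if_pos hm] at key1 key2; omega
      · rw [if_neg hm] at key1 key2; omega
  · have hxP : ({x} : Set ℤ) \ P = {x} := by ext y; simp [hP]; omega
    have hxD1 : x ∉ shiftSet S 1 \ P := fun h => hx h.1
    have e3 : (({x} : Set ℤ) ∪ (shiftSet S 1 \ P)).ncard = (shiftSet S 1 \ P).ncard + 1 := by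
      rw [Set.union_comm, Set.union_singleton, Set.ncard_insert_of_notMem hxD1 hfinD1]
    have hxD2 : (P \ shiftSet S 1) \ {x} = P \ shiftSet S 1 :=
      Set.diff_singleton_eq_self (fun h => hx0 h.1)
    refine ⟨?_, ?_, ?_⟩
    · rw [hTd, hxP]; exact (Set.finite_singleton _).union hfinD1
    · rw [hPd, hxD2]; exact hfinD2
    · rw [hTd, hxP, hPd, hxD2, e3, e1]
      by_cases hm : (-1 : ℤ) ∈ S
      · rw [if_pos hm] at key1 key2; omega
      · rw [if_neg hm] at key1 key2; omega

lemma mem_mkTuple {N : ℕ} {S : Set ℤ} {a : Fin N → ℤ} {σ : Equiv.Perm (Fin N)}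
    {i : Fin N} {x : ℤ} :
    x ∈ mkTuple N S a σ i ↔
      (∃ j : Fin N, (j : ℕ) ≤ (i : ℕ) ∧ x = a (σ j) + ((i : ℕ) : ℤ) + 1 - (N : ℤ)) ∨
        x - (((i : ℕ) : ℤ) + 1) ∈ S := by
  simp only [mkTuple, Set.mem_union, Set.mem_image, Set.mem_setOf_eq, mem_shiftSet]
  constructor
  · rintro (⟨j, hj, rfl⟩ | h)
    · exact Or.inl ⟨j, hj, rfl⟩
    · exact Or.inr h
  · rintro (⟨j, hj, rfl⟩ | h)
    · exact Or.inl ⟨j, hj, rfl⟩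
    · exact Or.inr h

/-- Fix `N > 1`.  Let `S` be a KdV subset with leading term
`A = {a₁ < … < a_N}` and let `σ` be a permutation of `{1,…,N}`.  For `i = 1,…,N` set
`S_i = {a_{σ(1)}+i−N, …, a_{σ(i)}+i−N} ∪ (S+i)`.  Then `(S₁,…,S_N)` is an mKdV tuple
of subsets and `S_N = S`. -/
theorem mkTuple_isMKdV (N : ℕ) [NeZero N] (hN : 1 < N) (S : Set ℤ) (hS : IsKdV N S)
    (A : Finset ℤ) (hA : IsLeadingTerm N S A)
    (a : Fin N → ℤ) (ha : StrictMono a) (haA : (↑A : Set ℤ) = Set.range a)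
    (σ : Equiv.Perm (Fin N)) :
    IsMKdVTuple N (mkTuple N S a σ) ∧ mkTuple N S a σ ⟨N - 1, by omega⟩ = S := by
  obtain ⟨hvcz, hshiftN⟩ := hS
  obtain ⟨hcard, hunion, hdisj⟩ := hA
  have hAS : (↑A : Set ℤ) ⊆ S := hunion ▸ Set.subset_union_left
  have haS : ∀ j : Fin N, a j ∈ S := fun j => hAS (haA ▸ Set.mem_range_self j)
  have haNS : ∀ j : Fin N, a j ∉ shiftSet S N := by
    intro j hj
    have : a j ∈ (↑A : Set ℤ) ∩ shiftSet S N := ⟨haA ▸ Set.mem_range_self j, hj⟩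
    rw [hdisj] at this
    exact this
  have hainj : Function.Injective fun j : Fin N => a (σ j) :=
    ha.injective.comp σ.injective
  -- last entry is S
  have hlast : mkTuple N S a σ ⟨N - 1, by omega⟩ = S := by
    ext x
    rw [mem_mkTuple]
    simp only [Fin.val_mk]
    have hcast : (((N - 1 : ℕ) : ℤ)) + 1 = (N : ℤ) := by
      have : 1 ≤ N := le_of_lt hN
      push_cast [this]
      ring
    constructor
    · rintro (⟨j, hj, rfl⟩ | h)
      · have : a (σ j) + ((N - 1 : ℕ) : ℤ) + 1 - N = a (σ j) := by
          rw [add_assoc, hcast]; ring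
        rw [this]
        exact haS (σ j)
      · rw [hcast] at h
        exact hshiftN (mem_shiftSet.mpr h)
    · intro hx
      have : x ∈ (↑A : Set ℤ) ∪ shiftSet S N := hunion.symm ▸ hx
      rcases this with hxA | hxsh
      · rw [haA] at hxA
        obtain ⟨j, rfl⟩ := hxA
        exact Or.inl ⟨σ.symm j, Nat.le_pred_of_lt (σ.symm j).isLt, by rw [add_assoc, hcast]; simp⟩
      · exact Or.inr (by rw [hcast]; exact mem_shiftSet.mp hxsh)
  -- freshness of the new element at each level
  have hfresh : ∀ (i : ℕ) (hi : i < N) (k : Fin N) (y : ℤ),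
      y - (((i : ℕ) : ℤ) + 1) = a (σ k) - N →
        y ∈ mkTuple N S a σ ⟨i, hi⟩ → ∃ j : Fin N, (j : ℕ) ≤ i ∧ a (σ j) = a (σ k) := by
    intro i hi k y hy hmem
    rw [mem_mkTuple] at hmem
    simp only [Fin.val_mk] at hmem
    rcases hmem with ⟨j, hj, hje⟩ | hms
    · exact ⟨j, hj, by omega⟩
    · exfalso
      apply haNS (σ k)
      rw [mem_shiftSet]
      have : a (σ k) - N = y - (((i : ℕ) : ℤ) + 1) := hy.symm
      rw [this]
      exact hms
  have h0N : 0 < N := by omega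
  -- base case of the recursion
  have rec0 : mkTuple N S a σ ⟨0, h0N⟩ =
      {a (σ ⟨0, h0N⟩) + 1 - (N : ℤ)} ∪ shiftSet S 1 := by
    ext x
    rw [Set.mem_union, mem_mkTuple]
    simp only [Fin.val_mk, Nat.cast_zero, Set.mem_singleton_iff, mem_shiftSet, zero_add]
    constructor
    · rintro (⟨j, hj, rfl⟩ | h)
      · left
        have : j = ⟨0, h0N⟩ := Fin.ext (by simp only [Fin.val_mk]; omega)
        rw [this]; ring
      · exact Or.inr h
    · rintro (rfl | h)
      · exact Or.inl ⟨⟨0, h0N⟩, le_refl _, by ring⟩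
      · exact Or.inr h
  -- successor step of the recursion
  have recS : ∀ (i : ℕ) (hi : i + 1 < N),
      mkTuple N S a σ ⟨i + 1, hi⟩ =
        {a (σ ⟨i + 1, hi⟩) + ((i : ℤ) + 1) + 1 - (N : ℤ)} ∪
          shiftSet (mkTuple N S a σ ⟨i, by omega⟩) 1 := by
    intro i hi
    ext x
    rw [Set.mem_union, mem_mkTuple, Set.mem_singleton_iff, mem_shiftSet, mem_mkTuple]
    simp only [Fin.val_mk]
    constructor
    · rintro (⟨j, hj, rfl⟩ | h)
      · rcases Nat.lt_or_ge (j : ℕ) (i + 1) with hj' | hj'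
        · right; left
          exact ⟨j, by omega, by push_cast; ring⟩
        · left
          have : j = ⟨i + 1, hi⟩ := Fin.ext (by simp only [Fin.val_mk]; omega)
          rw [this]; push_cast; ring
      · right; right
        have e : x - 1 - (((i : ℕ) : ℤ) + 1) = x - (((i + 1 : ℕ) : ℤ) + 1) := by
          push_cast; ring
        rw [e]; exact h
    · rintro (rfl | (⟨j, hj, hje⟩ | h))
      · exact Or.inl ⟨⟨i + 1, hi⟩, le_refl _, by push_cast; ring⟩
      · exact Or.inl ⟨j, by omega, by push_cast at hje ⊢; omega⟩
      · refine Or.inr ?_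
        have e : x - (((i + 1 : ℕ) : ℤ) + 1) = x - 1 - (((i : ℕ) : ℤ) + 1) := by
          push_cast; ring
        rw [e]; exact h
  -- the new element is fresh at each level
  have fresh0 : a (σ ⟨0, h0N⟩) + 1 - (N : ℤ) ∉ shiftSet S 1 := by
    intro h
    rw [mem_shiftSet] at h
    apply haNS (σ ⟨0, h0N⟩)
    rw [mem_shiftSet]
    have e : a (σ ⟨0, h0N⟩) - N = a (σ ⟨0, h0N⟩) + 1 - N - 1 := by ring
    rw [e]; exact h
  have freshS : ∀ (i : ℕ) (hi : i + 1 < N),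
      a (σ ⟨i + 1, hi⟩) + ((i : ℤ) + 1) + 1 - (N : ℤ) ∉
        shiftSet (mkTuple N S a σ ⟨i, by omega⟩) 1 := by
    intro i hi hmem
    rw [mem_shiftSet] at hmem
    obtain ⟨j, hj, hje⟩ := hfresh i (by omega) ⟨i + 1, hi⟩ _ (by ring) hmem
    have : j = ⟨i + 1, hi⟩ := hainj hje
    rw [this] at hj
    simp only [Fin.val_mk] at hj
    omega
  -- virtual cardinal zero for every entry
  have hvczAll : ∀ (i : ℕ) (hi : i < N), VirtualCardZero (mkTuple N S a σ ⟨i, hi⟩) := by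
    intro i
    induction i with
    | zero =>
      intro hi
      rw [rec0]
      exact vcz_step S hvcz _ fresh0
    | succ i ih =>
      intro hi
      rw [recS i hi]
      exact vcz_step _ (ih (by omega)) _ (freshS i hi)
  -- closure under shift by N
  have hclosed : ∀ i : Fin N, shiftSet (mkTuple N S a σ i) (N : ℤ) ⊆ mkTuple N S a σ i := by
    intro i x hx
    rw [mem_shiftSet, mem_mkTuple] at hx
    rw [mem_mkTuple]
    rcases hx with ⟨j, hj, hje⟩ | h
    · right
      have e : x - (((i : ℕ) : ℤ) + 1) = a (σ j) := by omega
      rw [e]; exact haS (σ j)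
    · right
      refine hshiftN (mem_shiftSet.mpr ?_)
      have e : x - (((i : ℕ) : ℤ) + 1) - N = x - N - (((i : ℕ) : ℤ) + 1) := by ring
      rw [e]; exact h
  -- the cyclic shift property
  have hone : ((1 : Fin N) : ℕ) = 1 % N := rfl
  have hcyc : ∀ i : Fin N, shiftSet (mkTuple N S a σ i) 1 ⊆ mkTuple N S a σ (i + 1) := by
    intro i
    by_cases hi : (i : ℕ) + 1 < N
    · have hval : (i + 1 : Fin N) = ⟨(i : ℕ) + 1, hi⟩ := by
        apply Fin.ext
        simp only [Fin.add_def, Fin.val_mk]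
        rw [hone, Nat.mod_eq_of_lt hN, Nat.mod_eq_of_lt hi]
      rw [hval, recS (i : ℕ) hi]
      have hi' : mkTuple N S a σ ⟨(i : ℕ), by omega⟩ = mkTuple N S a σ i := by
        congr 1
      rw [hi']
      exact Set.subset_union_right
    · have hilast : (i : ℕ) = N - 1 := by have := i.isLt; omega
      have hieq : i = ⟨N - 1, by omega⟩ := Fin.ext (by simp only [Fin.val_mk]; exact hilast)
      have hval : (i + 1 : Fin N) = ⟨0, h0N⟩ := by
        apply Fin.ext
        simp only [Fin.add_def, Fin.val_mk]
        rw [hone, Nat.mod_eq_of_lt hN, hilast]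
        have hsub : N - 1 + 1 = N := by omega
        rw [hsub, Nat.mod_self]
      rw [hval, rec0, hieq, hlast]
      exact Set.subset_union_right
  refine ⟨⟨?_, hcyc⟩, hlast⟩
  intro i
  refine ⟨?_, hclosed i⟩
  have := hvczAll (i : ℕ) i.isLt
  rwa [Fin.eta] at this
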